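/- Let Δ ≥ 2 be an integer, d ≤ Δ an integer, λ ∈ (0,1), β_c = 1 − 2/(2e^{−1/2}Δ + 3), and γ₁,…,γ_d, β₁,…,β_d ∈ [β_c, 1]. Let w₁,…,w_d be positive integers and let f(r) = λ ∏_{i=1}^d [ 1 − (1−γ_i)·(r⁰_{i1}/(1+r⁰_{i1}))·∏_{j=2}^{w_i} r¹_{ij}/(1+r¹_{ij}) ] / [ 1 − (1−β_i)·(1/(1+r⁰_{i1}))·∏_{j=2}^{w_i} 1/(1+r⁰_{ij}) ] be a function of the (Σ_i (2w_i − 1)) variables r⁰_{ij} (1 ≤ j ≤ w_i) and r¹_{ij} (2 ≤ j ≤ w_i). With Φ(x) = 1/x, there exist constants α < 1 and c > 0 depending on Δ (but not on the w_i) such that Σ_{i=1}^d w_i^c ( Σ_{j=1}^{w_i} (Φ(f(r))/Φ(r⁰_{ij}))·|∂f/∂r⁰_{ij}(r)| + Σ_{j=2}^{w_i} (Φ(f(r))/Φ(r¹_{ij}))·|∂f/∂r¹_{ij}(r)| ) ≤ α for every r with all coordinates in [λ β_c^Δ, λ β_c^{−Δ}]. -/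

import Mathlib

/-- The two-state spin recursion function on hypergraphs,
    f(r) = λ ∏_{i=1}^d [1 − (1−γᵢ)(r⁰ᵢ₁/(1+r⁰ᵢ₁))∏_{j=2}^{wᵢ} r¹ᵢⱼ/(1+r¹ᵢⱼ)]
                      / [1 − (1−βᵢ)(1/(1+r⁰ᵢ₁))∏_{j=2}^{wᵢ} 1/(1+r⁰ᵢⱼ)].
    Here `r0 i j` stands for r⁰_{i,j+1} and `r1 i j` for r¹_{i,j+1} (0-indexed),
    so `r0 i 0 = r⁰ᵢ₁` and the products over j = 2,…,wᵢ become products over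
    `j ∈ Finset.Ico 1 (w i)`. -/
noncomputable def spinF (lam : ℝ) {d : ℕ} (w : Fin d → ℕ) (be ga : Fin d → ℝ)
    (r0 r1 : Fin d → ℕ → ℝ) : ℝ :=
  lam * ∏ i : Fin d,
    (1 - (1 - ga i) * (r0 i 0 / (1 + r0 i 0)) *
        ∏ j ∈ Finset.Ico 1 (w i), r1 i j / (1 + r1 i j)) /
      (1 - (1 - be i) * (1 / (1 + r0 i 0)) *
        ∏ j ∈ Finset.Ico 1 (w i), 1 / (1 + r0 i j))

/-- The partial derivative ∂f/∂r⁰_{ij}. -/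
noncomputable def spinPD0 (lam : ℝ) {d : ℕ} (w : Fin d → ℕ) (be ga : Fin d → ℝ)
    (r0 r1 : Fin d → ℕ → ℝ) (i : Fin d) (j : ℕ) : ℝ :=
  deriv (fun t => spinF lam w be ga (Function.update r0 i (Function.update (r0 i) j t)) r1)
    (r0 i j)

/-- The partial derivative ∂f/∂r¹_{ij}. -/
noncomputable def spinPD1 (lam : ℝ) {d : ℕ} (w : Fin d → ℕ) (be ga : Fin d → ℝ)
    (r0 r1 : Fin d → ℕ → ℝ) (i : Fin d) (j : ℕ) : ℝ :=
  deriv (fun t => spinF lam w be ga r0 (Function.update r1 i (Function.update (r1 i) j t)))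
    (r1 i j)

section
open Finset
lemma hasDerivAt_gen (K n0 n1 d0 d1 t : ℝ) (ht : 1 + t ≠ 0)
    (hD : d0 + d1 * (1 / (1 + t)) ≠ 0) :
    HasDerivAt (fun s : ℝ => K * ((n0 + n1 * (s / (1 + s))) / (d0 + d1 * (1 / (1 + s)))))
      (K * ((n1 * (d0 + d1 * (1 / (1 + t))) + d1 * (n0 + n1 * (t / (1 + t)))) /
        ((1 + t) ^ 2 * (d0 + d1 * (1 / (1 + t))) ^ 2))) t := by
  have h1 : HasDerivAt (fun s : ℝ => 1 + s) 1 t := by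
    simpa using (hasDerivAt_id t).const_add (1 : ℝ)
  have h2 : HasDerivAt (fun s : ℝ => s / (1 + s)) (1 / (1 + t) ^ 2) t := by
    have h := (hasDerivAt_id t).div h1 ht
    refine h.congr_deriv ?_
    field_simp
    simp
  have h3 : HasDerivAt (fun s : ℝ => 1 / (1 + s)) (-(1 / (1 + t) ^ 2)) t := by
    have h := (hasDerivAt_const t (1 : ℝ)).div h1 ht
    refine h.congr_deriv ?_
    field_simp
    simp
  have hN : HasDerivAt (fun s : ℝ => n0 + n1 * (s / (1 + s))) (n1 * (1 / (1 + t) ^ 2)) t :=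
    (h2.const_mul n1).const_add n0
  have hDD : HasDerivAt (fun s : ℝ => d0 + d1 * (1 / (1 + s))) (d1 * -(1 / (1 + t) ^ 2)) t :=
    (h3.const_mul d1).const_add d0
  have h := (hN.div hDD hD).const_mul K
  have hD' : d0 * (1 + t) + d1 ≠ 0 := by
    intro hz
    apply hD
    have : d0 + d1 * (1 / (1 + t)) = (d0 * (1 + t) + d1) / (1 + t) := by field_simp
    rw [this, hz, zero_div]
  refine h.congr_deriv ?_
  field_simp
  ring

lemma aux_te (t : ℝ) (ht : 0 ≤ t) : t * Real.exp (-t) ≤ Real.exp (-1) := by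
  have h2 : t ≤ Real.exp (t - 1) := by
    have := Real.add_one_le_exp (t - 1); linarith
  have h3 := Real.exp_pos (-t)
  calc t * Real.exp (-t) ≤ Real.exp (t - 1) * Real.exp (-t) :=
        mul_le_mul_of_nonneg_right h2 h3.le
    _ = Real.exp (-1) := by rw [← Real.exp_add]; ring_nf

lemma aux_prod_le (s : Finset ℕ) (v : ℕ → ℝ) (h0 : ∀ j ∈ s, 0 ≤ v j) :
    ∏ j ∈ s, v j ≤ Real.exp (-∑ j ∈ s, (1 - v j)) := by
  have hstep : ∀ j ∈ s, v j ≤ Real.exp (-(1 - v j)) := fun j hj => by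
    have := Real.add_one_le_exp (-(1 - v j)); linarith
  calc ∏ j ∈ s, v j ≤ ∏ j ∈ s, Real.exp (-(1 - v j)) := Finset.prod_le_prod h0 hstep
    _ = Real.exp (∑ j ∈ s, -(1 - v j)) := (Real.exp_sum s _).symm
    _ = Real.exp (-∑ j ∈ s, (1 - v j)) := by rw [Finset.sum_neg_distrib]

lemma aux_lemA (a : ℝ) (s : Finset ℕ) (v : ℕ → ℝ) (ha0 : 0 ≤ a) (ha1 : a ≤ 1)
    (hv0 : ∀ j ∈ s, 0 ≤ v j) (hv1 : ∀ j ∈ s, v j ≤ 1) :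
    (a * ∏ j ∈ s, v j) * ((1 - a) + ∑ j ∈ s, (1 - v j)) ≤ a * Real.exp (-a) := by
  have hS0 : 0 ≤ ∑ j ∈ s, (1 - v j) := Finset.sum_nonneg fun j hj => by linarith [hv1 j hj]
  set S := ∑ j ∈ s, (1 - v j) with hS
  have hp : ∏ j ∈ s, v j ≤ Real.exp (-S) := aux_prod_le s v hv0
  have hkey : ((1 - a) + S) * Real.exp (-((1 - a) + S)) ≤ Real.exp (-1) :=
    aux_te _ (by linarith)
  have hexp : Real.exp (-S) = Real.exp (1 - a) * Real.exp (-((1 - a) + S)) := by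
    rw [← Real.exp_add]; ring_nf
  have h1 : (a * ∏ j ∈ s, v j) * ((1 - a) + S) ≤ (a * Real.exp (-S)) * ((1 - a) + S) := by
    apply mul_le_mul_of_nonneg_right _ (by linarith)
    exact mul_le_mul_of_nonneg_left hp ha0
  have h2 : (a * Real.exp (-S)) * ((1 - a) + S)
      = a * Real.exp (1 - a) * (((1 - a) + S) * Real.exp (-((1 - a) + S))) := by
    rw [hexp]; ring
  have h3 : a * Real.exp (1 - a) * (((1 - a) + S) * Real.exp (-((1 - a) + S)))
      ≤ a * Real.exp (1 - a) * Real.exp (-1) :=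
    mul_le_mul_of_nonneg_left hkey (by positivity)
  have h4 : a * Real.exp (1 - a) * Real.exp (-1) = a * Real.exp (-a) := by
    rw [mul_assoc, ← Real.exp_add]; ring_nf
  linarith

lemma aux_lemB (a : ℝ) (ha0 : 0 ≤ a) (ha1 : a ≤ 1) :
    a * Real.exp (-a) + (1 - a) * Real.exp (-(1 - a)) ≤ Real.exp (-(1/2 : ℝ)) := by
  have hA : Real.exp (-a) * (1/2 + a) ≤ Real.exp (-(1/2 : ℝ)) := by
    have h1 : (1/2 + a) ≤ Real.exp (a - 1/2) := by
      have := Real.add_one_le_exp (a - 1/2); linarith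
    calc Real.exp (-a) * (1/2 + a) ≤ Real.exp (-a) * Real.exp (a - 1/2) :=
          mul_le_mul_of_nonneg_left h1 (Real.exp_pos _).le
      _ = Real.exp (-(1/2 : ℝ)) := by rw [← Real.exp_add]; ring_nf
  have hB : Real.exp (-(1 - a)) * (3/2 - a) ≤ Real.exp (-(1/2 : ℝ)) := by
    have h1 : (3/2 - a) ≤ Real.exp (1/2 - a) := by
      have := Real.add_one_le_exp (1/2 - a); linarith
    calc Real.exp (-(1 - a)) * (3/2 - a) ≤ Real.exp (-(1 - a)) * Real.exp (1/2 - a) :=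
          mul_le_mul_of_nonneg_left h1 (Real.exp_pos _).le
      _ = Real.exp (-(1/2 : ℝ)) := by rw [← Real.exp_add]; ring_nf
  nlinarith [mul_nonneg (sub_nonneg.mpr hA) (mul_nonneg ha0 (by linarith : (0:ℝ) ≤ 3/2 - a)),
    mul_nonneg (sub_nonneg.mpr hB) (mul_nonneg (by linarith : (0:ℝ) ≤ 1 - a) (by linarith : (0:ℝ) ≤ 1/2 + a)),
    mul_nonneg (Real.exp_pos (-(1/2:ℝ))).le (sq_nonneg (a - 1/2)),
    mul_pos (show (0:ℝ) < 1/2 + a by linarith) (show (0:ℝ) < 3/2 - a by linarith),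
    Real.exp_pos (-a), Real.exp_pos (-(1 - a))]

lemma aux_box (a ρ : ℝ) (s : Finset ℕ) (v : ℕ → ℝ) (hρ : 0 ≤ ρ) (hρ1 : ρ ≤ 1)
    (ha0 : 0 ≤ a) (haρ : a ≤ ρ) (hv : ∀ j ∈ s, 0 ≤ v j) (hvρ : ∀ j ∈ s, v j ≤ ρ)
    (ha1 : a ≤ 1) :
    (a * ∏ j ∈ s, v j) * ((1 - a) + ∑ j ∈ s, (1 - v j)) ≤ ((s.card : ℝ) + 1) * ρ ^ (s.card + 1) := by
  have hp : ∏ j ∈ s, v j ≤ ρ ^ s.card := by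
    calc ∏ j ∈ s, v j ≤ ∏ _j ∈ s, ρ := Finset.prod_le_prod hv hvρ
      _ = ρ ^ s.card := Finset.prod_const ρ
  have hsum : ∑ j ∈ s, (1 - v j) ≤ (s.card : ℝ) := by
    calc ∑ j ∈ s, (1 - v j) ≤ ∑ _j ∈ s, (1:ℝ) :=
          Finset.sum_le_sum fun j hj => by linarith [hv j hj]
      _ = (s.card : ℝ) := by simp
  have h1 : a * ∏ j ∈ s, v j ≤ ρ ^ (s.card + 1) := by
    calc a * ∏ j ∈ s, v j ≤ ρ * ρ ^ s.card := mul_le_mul haρ hp (Finset.prod_nonneg hv) hρ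
      _ = ρ ^ (s.card + 1) := by rw [pow_succ]; ring
  have h3 : 0 ≤ (1 - a) + ∑ j ∈ s, (1 - v j) := by
    have : 0 ≤ ∑ j ∈ s, (1 - v j) :=
      Finset.sum_nonneg fun j hj => by linarith [hvρ j hj]
    linarith
  calc (a * ∏ j ∈ s, v j) * ((1 - a) + ∑ j ∈ s, (1 - v j))
      ≤ ρ ^ (s.card + 1) * ((s.card : ℝ) + 1) := by
        apply mul_le_mul h1 (by linarith) h3 (by positivity)
    _ = ((s.card : ℝ) + 1) * ρ ^ (s.card + 1) := mul_comm _ _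

noncomputable def eP {d : ℕ} (w : Fin d → ℕ) (r0 r1 : Fin d → ℕ → ℝ) (i : Fin d) : ℝ :=
  r0 i 0 / (1 + r0 i 0) * ∏ j ∈ Finset.Ico 1 (w i), r1 i j / (1 + r1 i j)

noncomputable def eQ {d : ℕ} (w : Fin d → ℕ) (r0 : Fin d → ℕ → ℝ) (i : Fin d) : ℝ :=
  1 / (1 + r0 i 0) * ∏ j ∈ Finset.Ico 1 (w i), 1 / (1 + r0 i j)

noncomputable def eA {d : ℕ} (w : Fin d → ℕ) (ga : Fin d → ℝ) (r0 r1 : Fin d → ℕ → ℝ)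
    (i : Fin d) : ℝ := 1 - (1 - ga i) * eP w r0 r1 i

noncomputable def eB {d : ℕ} (w : Fin d → ℕ) (be : Fin d → ℝ) (r0 : Fin d → ℕ → ℝ)
    (i : Fin d) : ℝ := 1 - (1 - be i) * eQ w r0 i

lemma spinF_eq (lam : ℝ) {d : ℕ} (w : Fin d → ℕ) (be ga : Fin d → ℝ)
    (r0 r1 : Fin d → ℕ → ℝ) :
    spinF lam w be ga r0 r1 = lam * ∏ i : Fin d, eA w ga r0 r1 i / eB w be r0 i := by
  simp only [spinF]
  congr 1
  exact Finset.prod_congr rfl fun i _ => by simp only [eA, eB, eP, eQ]; ring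

section terms

variable (lam : ℝ) {d : ℕ} (w : Fin d → ℕ) (be ga : Fin d → ℝ) (r0 r1 : Fin d → ℕ → ℝ)

set_option maxHeartbeats 2000000 in
lemma term1_eq (i : Fin d) (j : ℕ) (hj : j ∈ Finset.Ico 1 (w i))
    (hlam : 0 < lam)
    (hr0 : ∀ i' j', j' < w i' → 0 < r0 i' j')
    (hr1 : ∀ i' j', 1 ≤ j' → j' < w i' → 0 < r1 i' j')
    (hw : ∀ i', 0 < w i')
    (hga : ∀ i', 0 ≤ 1 - ga i')
    (hA : ∀ i', 0 < eA w ga r0 r1 i') (hB : ∀ i', 0 < eB w be r0 i') :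
    r1 i j / spinF lam w be ga r0 r1 * |spinPD1 lam w be ga r0 r1 i j| =
      (1 - ga i) / eA w ga r0 r1 i * (eP w r0 r1 i * (1 / (1 + r1 i j))) := by
  obtain ⟨hj1, hj2⟩ := Finset.mem_Ico.mp hj
  have hy : 0 < r1 i j := hr1 i j hj1 hj2
  have hx0 : 0 < r0 i 0 := hr0 i 0 (hw i)
  have h1y : (0:ℝ) < 1 + r1 i j := by linarith
  have h1x0 : (0:ℝ) < 1 + r0 i 0 := by linarith
  have hrest_pos : 0 < ∏ j' ∈ (Finset.Ico 1 (w i)).erase j, r1 i j' / (1 + r1 i j') := by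
    refine Finset.prod_pos fun j' hj' => ?_
    obtain ⟨hj'1, hj'2⟩ := Finset.mem_Ico.mp (Finset.mem_of_mem_erase hj')
    have := hr1 i j' hj'1 hj'2
    positivity
  have hcomplpos : 0 < ∏ i' ∈ ({i}ᶜ : Finset (Fin d)), eA w ga r0 r1 i' / eB w be r0 i' :=
    Finset.prod_pos fun i' _ => div_pos (hA i') (hB i')
  have hupd : (fun t => spinF lam w be ga r0 (Function.update r1 i (Function.update (r1 i) j t)))
      = fun t => (lam * ∏ i' ∈ ({i}ᶜ : Finset (Fin d)), eA w ga r0 r1 i' / eB w be r0 i') *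
        ((1 + (-((1 - ga i) * (r0 i 0 / (1 + r0 i 0)) *
            ∏ j' ∈ (Finset.Ico 1 (w i)).erase j, r1 i j' / (1 + r1 i j'))) * (t / (1 + t))) /
          (eB w be r0 i + 0 * (1 / (1 + t)))) := by
    funext t
    simp only [spinF]
    rw [Fintype.prod_eq_mul_prod_compl i]
    simp only [Function.update_self]
    rw [← Finset.mul_prod_erase (Finset.Ico 1 (w i))
      (fun j' => Function.update (r1 i) j t j' / (1 + Function.update (r1 i) j t j')) hj]
    rw [Function.update_self]
    have hrest : ∏ j' ∈ (Finset.Ico 1 (w i)).erase j,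
        Function.update (r1 i) j t j' / (1 + Function.update (r1 i) j t j')
        = ∏ j' ∈ (Finset.Ico 1 (w i)).erase j, r1 i j' / (1 + r1 i j') :=
      Finset.prod_congr rfl fun j' hj' => by
        rw [Function.update_of_ne (Finset.ne_of_mem_erase hj')]
    rw [hrest]
    have hcompl : ∏ i' ∈ ({i}ᶜ : Finset (Fin d)),
        (1 - (1 - ga i') * (r0 i' 0 / (1 + r0 i' 0)) *
          ∏ j' ∈ Finset.Ico 1 (w i'),
            Function.update r1 i (Function.update (r1 i) j t) i' j' /
              (1 + Function.update r1 i (Function.update (r1 i) j t) i' j')) /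
        (1 - (1 - be i') * (1 / (1 + r0 i' 0)) *
          ∏ j' ∈ Finset.Ico 1 (w i'), 1 / (1 + r0 i' j'))
        = ∏ i' ∈ ({i}ᶜ : Finset (Fin d)), eA w ga r0 r1 i' / eB w be r0 i' := by
      refine Finset.prod_congr rfl fun i' hi' => ?_
      have hne : i' ≠ i := by simpa using hi'
      rw [Function.update_of_ne hne]
      simp only [eA, eB, eP, eQ]; ring
    rw [hcompl]
    simp only [eA, eB, eP, eQ]
    ring
  have hD0 : eB w be r0 i + 0 * (1 / (1 + r1 i j)) ≠ 0 := by
    simpa using (hB i).ne'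
  have hPD := (hasDerivAt_gen
    (lam * ∏ i' ∈ ({i}ᶜ : Finset (Fin d)), eA w ga r0 r1 i' / eB w be r0 i') 1
    (-((1 - ga i) * (r0 i 0 / (1 + r0 i 0)) *
      ∏ j' ∈ (Finset.Ico 1 (w i)).erase j, r1 i j' / (1 + r1 i j')))
    (eB w be r0 i) 0 (r1 i j) h1y.ne' hD0).deriv
  unfold spinPD1
  rw [hupd, hPD]
  simp only [zero_mul, add_zero, mul_zero, mul_one]
  rw [show (lam * ∏ i' ∈ ({i}ᶜ : Finset (Fin d)), eA w ga r0 r1 i' / eB w be r0 i') *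
      (-((1 - ga i) * (r0 i 0 / (1 + r0 i 0)) *
        ∏ j' ∈ (Finset.Ico 1 (w i)).erase j, r1 i j' / (1 + r1 i j')) * eB w be r0 i /
        ((1 + r1 i j) ^ 2 * eB w be r0 i ^ 2)) =
      -((lam * ∏ i' ∈ ({i}ᶜ : Finset (Fin d)), eA w ga r0 r1 i' / eB w be r0 i') *
        ((1 - ga i) * ((r0 i 0 / (1 + r0 i 0)) *
          (∏ j' ∈ (Finset.Ico 1 (w i)).erase j, r1 i j' / (1 + r1 i j')) * (eB w be r0 i /
          ((1 + r1 i j) ^ 2 * eB w be r0 i ^ 2))))) from by ring]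
  rw [abs_neg, abs_of_nonneg (by
    refine mul_nonneg (mul_pos hlam hcomplpos).le (mul_nonneg (hga i) ?_)
    have h2 : (0:ℝ) ≤ r0 i 0 / (1 + r0 i 0) := by positivity
    refine mul_nonneg (mul_nonneg h2 hrest_pos.le) ?_
    exact div_nonneg (hB i).le (by positivity))]
  rw [spinF_eq, Fintype.prod_eq_mul_prod_compl i]
  simp only [eP]
  rw [← Finset.mul_prod_erase (Finset.Ico 1 (w i)) (fun j' => r1 i j' / (1 + r1 i j')) hj]
  have hAne := (hA i).ne'
  have hBne := (hB i).ne'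
  set PC := ∏ i' ∈ ({i}ᶜ : Finset (Fin d)), eA w ga r0 r1 i' / eB w be r0 i' with hPC
  set PR := ∏ j' ∈ (Finset.Ico 1 (w i)).erase j, r1 i j' / (1 + r1 i j') with hPR
  set A := eA w ga r0 r1 i
  set B := eB w be r0 i
  set y := r1 i j
  set q := r0 i 0 / (1 + r0 i 0)
  field_simp

set_option maxHeartbeats 2000000 in
lemma term0_eq (i : Fin d) (j : ℕ) (hj : j ∈ Finset.Ico 1 (w i))
    (hlam : 0 < lam)
    (hr0 : ∀ i' j', j' < w i' → 0 < r0 i' j')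
    (hw : ∀ i', 0 < w i')
    (hbe : ∀ i', 0 ≤ 1 - be i')
    (hA : ∀ i', 0 < eA w ga r0 r1 i') (hB : ∀ i', 0 < eB w be r0 i') :
    r0 i j / spinF lam w be ga r0 r1 * |spinPD0 lam w be ga r0 r1 i j| =
      (1 - be i) / eB w be r0 i * (eQ w r0 i * (r0 i j / (1 + r0 i j))) := by
  obtain ⟨hj1, hj2⟩ := Finset.mem_Ico.mp hj
  have hxj : 0 < r0 i j := hr0 i j hj2
  have hx0 : 0 < r0 i 0 := hr0 i 0 (hw i)
  have h1y : (0:ℝ) < 1 + r0 i j := by linarith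
  have h1x0 : (0:ℝ) < 1 + r0 i 0 := by linarith
  have hrest_pos : 0 < ∏ j' ∈ (Finset.Ico 1 (w i)).erase j, 1 / (1 + r0 i j') := by
    refine Finset.prod_pos fun j' hj' => ?_
    obtain ⟨hj'1, hj'2⟩ := Finset.mem_Ico.mp (Finset.mem_of_mem_erase hj')
    have := hr0 i j' hj'2
    positivity
  have hcomplpos : 0 < ∏ i' ∈ ({i}ᶜ : Finset (Fin d)), eA w ga r0 r1 i' / eB w be r0 i' :=
    Finset.prod_pos fun i' _ => div_pos (hA i') (hB i')
  have hsplitQ : ∏ j' ∈ Finset.Ico 1 (w i), 1 / (1 + r0 i j')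
      = (1 / (1 + r0 i j)) * ∏ j' ∈ (Finset.Ico 1 (w i)).erase j, 1 / (1 + r0 i j') :=
    (Finset.mul_prod_erase _ _ hj).symm
  have hDeq : (1:ℝ) + -((1 - be i) * (1 / (1 + r0 i 0)) *
        ∏ j' ∈ (Finset.Ico 1 (w i)).erase j, 1 / (1 + r0 i j')) * (1 / (1 + r0 i j))
      = eB w be r0 i := by
    simp only [eB, eQ]; rw [hsplitQ]; ring
  have hupd : (fun t => spinF lam w be ga (Function.update r0 i (Function.update (r0 i) j t)) r1)
      = fun t => (lam * ∏ i' ∈ ({i}ᶜ : Finset (Fin d)), eA w ga r0 r1 i' / eB w be r0 i') *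
        ((eA w ga r0 r1 i + 0 * (t / (1 + t))) /
          (1 + (-((1 - be i) * (1 / (1 + r0 i 0)) *
            ∏ j' ∈ (Finset.Ico 1 (w i)).erase j, 1 / (1 + r0 i j'))) * (1 / (1 + t)))) := by
    funext t
    simp only [spinF]
    rw [Fintype.prod_eq_mul_prod_compl i]
    simp only [Function.update_self]
    rw [Function.update_of_ne (show (0:ℕ) ≠ j from by omega)]
    rw [← Finset.mul_prod_erase (Finset.Ico 1 (w i))
      (fun j' => 1 / (1 + Function.update (r0 i) j t j')) hj]
    rw [Function.update_self]
    have hrest : ∏ j' ∈ (Finset.Ico 1 (w i)).erase j,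
        1 / (1 + Function.update (r0 i) j t j')
        = ∏ j' ∈ (Finset.Ico 1 (w i)).erase j, 1 / (1 + r0 i j') :=
      Finset.prod_congr rfl fun j' hj' => by
        rw [Function.update_of_ne (Finset.ne_of_mem_erase hj')]
    rw [hrest]
    have hcompl : ∏ i' ∈ ({i}ᶜ : Finset (Fin d)),
        (1 - (1 - ga i') * (Function.update r0 i (Function.update (r0 i) j t) i' 0 /
            (1 + Function.update r0 i (Function.update (r0 i) j t) i' 0)) *
          ∏ j' ∈ Finset.Ico 1 (w i'), r1 i' j' / (1 + r1 i' j')) /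
        (1 - (1 - be i') * (1 / (1 + Function.update r0 i (Function.update (r0 i) j t) i' 0)) *
          ∏ j' ∈ Finset.Ico 1 (w i'),
            1 / (1 + Function.update r0 i (Function.update (r0 i) j t) i' j'))
        = ∏ i' ∈ ({i}ᶜ : Finset (Fin d)), eA w ga r0 r1 i' / eB w be r0 i' := by
      refine Finset.prod_congr rfl fun i' hi' => ?_
      have hne : i' ≠ i := by simpa using hi'
      rw [Function.update_of_ne hne]
      simp only [eA, eB, eP, eQ]; ring
    rw [hcompl]
    simp only [eA, eB, eP, eQ]
    ring
  have hD0 : (1:ℝ) + (-((1 - be i) * (1 / (1 + r0 i 0)) *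
      ∏ j' ∈ (Finset.Ico 1 (w i)).erase j, 1 / (1 + r0 i j'))) * (1 / (1 + r0 i j)) ≠ 0 := by
    rw [hDeq]; exact (hB i).ne'
  have hPD := (hasDerivAt_gen
    (lam * ∏ i' ∈ ({i}ᶜ : Finset (Fin d)), eA w ga r0 r1 i' / eB w be r0 i')
    (eA w ga r0 r1 i) 0 1
    (-((1 - be i) * (1 / (1 + r0 i 0)) *
      ∏ j' ∈ (Finset.Ico 1 (w i)).erase j, 1 / (1 + r0 i j')))
    (r0 i j) h1y.ne' hD0).deriv
  unfold spinPD0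
  rw [hupd, hPD]
  rw [hDeq]
  simp only [zero_mul, add_zero, mul_zero, mul_one, zero_add]
  rw [show (lam * ∏ i' ∈ ({i}ᶜ : Finset (Fin d)), eA w ga r0 r1 i' / eB w be r0 i') *
      (-((1 - be i) * (1 / (1 + r0 i 0)) *
        ∏ j' ∈ (Finset.Ico 1 (w i)).erase j, 1 / (1 + r0 i j')) * eA w ga r0 r1 i /
        ((1 + r0 i j) ^ 2 * eB w be r0 i ^ 2)) =
      -((lam * ∏ i' ∈ ({i}ᶜ : Finset (Fin d)), eA w ga r0 r1 i' / eB w be r0 i') *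
        ((1 - be i) * ((1 / (1 + r0 i 0)) *
          (∏ j' ∈ (Finset.Ico 1 (w i)).erase j, 1 / (1 + r0 i j')) * (eA w ga r0 r1 i /
          ((1 + r0 i j) ^ 2 * eB w be r0 i ^ 2))))) from by ring]
  rw [abs_neg, abs_of_nonneg (by
    refine mul_nonneg (mul_pos hlam hcomplpos).le (mul_nonneg (hbe i) ?_)
    have h2 : (0:ℝ) ≤ 1 / (1 + r0 i 0) := by positivity
    refine mul_nonneg (mul_nonneg h2 hrest_pos.le) ?_
    exact div_nonneg (hA i).le (by positivity))]
  rw [spinF_eq, Fintype.prod_eq_mul_prod_compl i]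
  simp only [eQ]
  rw [hsplitQ]
  have hAne := (hA i).ne'
  have hBne := (hB i).ne'
  set PC := ∏ i' ∈ ({i}ᶜ : Finset (Fin d)), eA w ga r0 r1 i' / eB w be r0 i' with hPC
  set QR := ∏ j' ∈ (Finset.Ico 1 (w i)).erase j, 1 / (1 + r0 i j') with hQR
  set A := eA w ga r0 r1 i
  set B := eB w be r0 i
  field_simp

set_option maxHeartbeats 2000000 in
lemma term00_eq (i : Fin d)
    (hlam : 0 < lam)
    (hr0 : ∀ i' j', j' < w i' → 0 < r0 i' j')
    (hr1 : ∀ i' j', 1 ≤ j' → j' < w i' → 0 < r1 i' j')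
    (hw : ∀ i', 0 < w i')
    (hga : ∀ i', 0 ≤ 1 - ga i') (hbe : ∀ i', 0 ≤ 1 - be i')
    (hA : ∀ i', 0 < eA w ga r0 r1 i') (hB : ∀ i', 0 < eB w be r0 i') :
    r0 i 0 / spinF lam w be ga r0 r1 * |spinPD0 lam w be ga r0 r1 i 0| =
      (1 - ga i) / eA w ga r0 r1 i * (eP w r0 r1 i * (1 / (1 + r0 i 0))) +
      (1 - be i) / eB w be r0 i * (eQ w r0 i * (r0 i 0 / (1 + r0 i 0))) := by
  have hx0 : 0 < r0 i 0 := hr0 i 0 (hw i)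
  have h1x0 : (0:ℝ) < 1 + r0 i 0 := by linarith
  have hPR_pos : 0 < ∏ j' ∈ Finset.Ico 1 (w i), r1 i j' / (1 + r1 i j') := by
    refine Finset.prod_pos fun j' hj' => ?_
    obtain ⟨hj'1, hj'2⟩ := Finset.mem_Ico.mp hj'
    have := hr1 i j' hj'1 hj'2
    positivity
  have hQR_pos : 0 < ∏ j' ∈ Finset.Ico 1 (w i), 1 / (1 + r0 i j') := by
    refine Finset.prod_pos fun j' hj' => ?_
    obtain ⟨hj'1, hj'2⟩ := Finset.mem_Ico.mp hj'
    have := hr0 i j' hj'2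
    positivity
  have hcomplpos : 0 < ∏ i' ∈ ({i}ᶜ : Finset (Fin d)), eA w ga r0 r1 i' / eB w be r0 i' :=
    Finset.prod_pos fun i' _ => div_pos (hA i') (hB i')
  have hDeq : (1:ℝ) + -((1 - be i) * ∏ j' ∈ Finset.Ico 1 (w i), 1 / (1 + r0 i j')) *
        (1 / (1 + r0 i 0)) = eB w be r0 i := by
    simp only [eB, eQ]; ring
  have hNeq : (1:ℝ) + -((1 - ga i) * ∏ j' ∈ Finset.Ico 1 (w i), r1 i j' / (1 + r1 i j')) *
        (r0 i 0 / (1 + r0 i 0)) = eA w ga r0 r1 i := by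
    simp only [eA, eP]; ring
  have hupd : (fun t => spinF lam w be ga (Function.update r0 i (Function.update (r0 i) 0 t)) r1)
      = fun t => (lam * ∏ i' ∈ ({i}ᶜ : Finset (Fin d)), eA w ga r0 r1 i' / eB w be r0 i') *
        ((1 + (-((1 - ga i) * ∏ j' ∈ Finset.Ico 1 (w i), r1 i j' / (1 + r1 i j'))) * (t / (1 + t))) /
          (1 + (-((1 - be i) * ∏ j' ∈ Finset.Ico 1 (w i), 1 / (1 + r0 i j'))) * (1 / (1 + t)))) := by
    funext t
    simp only [spinF]
    rw [Fintype.prod_eq_mul_prod_compl i]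
    simp only [Function.update_self]
    have hrest : ∏ j' ∈ Finset.Ico 1 (w i),
        1 / (1 + Function.update (r0 i) 0 t j')
        = ∏ j' ∈ Finset.Ico 1 (w i), 1 / (1 + r0 i j') :=
      Finset.prod_congr rfl fun j' hj' => by
        rw [Function.update_of_ne (by have := (Finset.mem_Ico.mp hj').1; omega)]
    rw [hrest]
    have hcompl : ∏ i' ∈ ({i}ᶜ : Finset (Fin d)),
        (1 - (1 - ga i') * (Function.update r0 i (Function.update (r0 i) 0 t) i' 0 /
            (1 + Function.update r0 i (Function.update (r0 i) 0 t) i' 0)) *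
          ∏ j' ∈ Finset.Ico 1 (w i'), r1 i' j' / (1 + r1 i' j')) /
        (1 - (1 - be i') * (1 / (1 + Function.update r0 i (Function.update (r0 i) 0 t) i' 0)) *
          ∏ j' ∈ Finset.Ico 1 (w i'),
            1 / (1 + Function.update r0 i (Function.update (r0 i) 0 t) i' j'))
        = ∏ i' ∈ ({i}ᶜ : Finset (Fin d)), eA w ga r0 r1 i' / eB w be r0 i' := by
      refine Finset.prod_congr rfl fun i' hi' => ?_
      have hne : i' ≠ i := by simpa using hi'
      rw [Function.update_of_ne hne]
      simp only [eA, eB, eP, eQ]; ring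
    rw [hcompl]
    simp only [eA, eB, eP, eQ]
    ring
  have hD0 : (1:ℝ) + (-((1 - be i) * ∏ j' ∈ Finset.Ico 1 (w i), 1 / (1 + r0 i j'))) *
      (1 / (1 + r0 i 0)) ≠ 0 := by
    rw [hDeq]; exact (hB i).ne'
  have hPD := (hasDerivAt_gen
    (lam * ∏ i' ∈ ({i}ᶜ : Finset (Fin d)), eA w ga r0 r1 i' / eB w be r0 i')
    1 (-((1 - ga i) * ∏ j' ∈ Finset.Ico 1 (w i), r1 i j' / (1 + r1 i j')))
    1 (-((1 - be i) * ∏ j' ∈ Finset.Ico 1 (w i), 1 / (1 + r0 i j')))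
    (r0 i 0) h1x0.ne' hD0).deriv
  unfold spinPD0
  rw [hupd, hPD]
  rw [hDeq, hNeq]
  rw [show (lam * ∏ i' ∈ ({i}ᶜ : Finset (Fin d)), eA w ga r0 r1 i' / eB w be r0 i') *
      ((-((1 - ga i) * ∏ j' ∈ Finset.Ico 1 (w i), r1 i j' / (1 + r1 i j')) * eB w be r0 i +
        -((1 - be i) * ∏ j' ∈ Finset.Ico 1 (w i), 1 / (1 + r0 i j')) * eA w ga r0 r1 i) /
        ((1 + r0 i 0) ^ 2 * eB w be r0 i ^ 2)) =
      -((lam * ∏ i' ∈ ({i}ᶜ : Finset (Fin d)), eA w ga r0 r1 i' / eB w be r0 i') *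
        (((1 - ga i) * ((∏ j' ∈ Finset.Ico 1 (w i), r1 i j' / (1 + r1 i j')) * eB w be r0 i) +
          (1 - be i) * ((∏ j' ∈ Finset.Ico 1 (w i), 1 / (1 + r0 i j')) * eA w ga r0 r1 i)) /
          ((1 + r0 i 0) ^ 2 * eB w be r0 i ^ 2))) from by ring]
  rw [abs_neg, abs_of_nonneg (by
    refine mul_nonneg (mul_pos hlam hcomplpos).le (div_nonneg ?_ (by positivity))
    refine add_nonneg (mul_nonneg (hga i) (mul_nonneg hPR_pos.le (hB i).le))
      (mul_nonneg (hbe i) (mul_nonneg hQR_pos.le (hA i).le)))]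
  rw [spinF_eq, Fintype.prod_eq_mul_prod_compl i]
  simp only [eP, eQ]
  have hAne := (hA i).ne'
  have hBne := (hB i).ne'
  set PC := ∏ i' ∈ ({i}ᶜ : Finset (Fin d)), eA w ga r0 r1 i' / eB w be r0 i' with hPC
  set PR := ∏ j' ∈ Finset.Ico 1 (w i), r1 i j' / (1 + r1 i j') with hPR
  set QR := ∏ j' ∈ Finset.Ico 1 (w i), 1 / (1 + r0 i j') with hQR
  set A := eA w ga r0 r1 i
  set B := eB w be r0 i
  field_simp

end terms

lemma aux_mono (x y : ℝ) (hx : 0 ≤ x) (hxy : x ≤ y) : x / (1 + x) ≤ y / (1 + y) := by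
  have h1 : (0:ℝ) < 1 + x := by linarith
  have h2 : (0:ℝ) < 1 + y := by linarith
  rw [div_le_div_iff₀ h1 h2]; nlinarith

end

set_option maxHeartbeats 4000000 in
/-- Amortized decay-rate bound for the two-state spin recursion: for Δ ≥ 2, d ≤ Δ,
    λ ∈ (0,1), β_c = 1 − 2/(2e^{−1/2}Δ + 3) and all γᵢ, βᵢ ∈ [β_c, 1], there exist
    α < 1 and c > 0 (independent of the wᵢ) such that, with the potential Φ(x) = 1/x
    (so (Φ(f)/Φ(x))|∂f/∂x| = (x/f)·|∂f/∂x|),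
    Σᵢ wᵢ^c (Σ_{j=1}^{wᵢ} (r⁰ᵢⱼ/f)|∂f/∂r⁰ᵢⱼ| + Σ_{j=2}^{wᵢ} (r¹ᵢⱼ/f)|∂f/∂r¹ᵢⱼ|) ≤ α
    whenever all coordinates lie in [λβ_c^Δ, λβ_c^{−Δ}]. -/
theorem stmt_15 (Δ : ℕ) (hΔ : 2 ≤ Δ) (d : ℕ) (hd : d ≤ Δ)
    (lam : ℝ) (hlam : lam ∈ Set.Ioo (0 : ℝ) 1)
    (βc : ℝ) (hβc : βc = 1 - 2 / (2 * Real.exp (-(1 : ℝ) / 2) * Δ + 3))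
    (ga be : Fin d → ℝ) (hga : ∀ i, ga i ∈ Set.Icc βc 1) (hbe : ∀ i, be i ∈ Set.Icc βc 1) :
    ∃ α c : ℝ, α < 1 ∧ 0 < c ∧
      ∀ w : Fin d → ℕ, (∀ i, 0 < w i) →
        ∀ r0 r1 : Fin d → ℕ → ℝ,
          (∀ i j, j < w i → r0 i j ∈ Set.Icc (lam * βc ^ Δ) (lam / βc ^ Δ)) →
          (∀ i j, 1 ≤ j → j < w i → r1 i j ∈ Set.Icc (lam * βc ^ Δ) (lam / βc ^ Δ)) →
          ∑ i : Fin d, (w i : ℝ) ^ c *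
              ((∑ j ∈ Finset.range (w i),
                  r0 i j / spinF lam w be ga r0 r1 * |spinPD0 lam w be ga r0 r1 i j|) +
               (∑ j ∈ Finset.Ico 1 (w i),
                  r1 i j / spinF lam w be ga r0 r1 * |spinPD1 lam w be ga r0 r1 i j|)) ≤ α := by
  obtain ⟨hlam0, hlam1⟩ := hlam
  have hΔR : (2:ℝ) ≤ (Δ:ℝ) := by exact_mod_cast hΔ
  have hE : (0:ℝ) < Real.exp (-(1:ℝ)/2) := Real.exp_pos _
  have hEE : Real.exp (-(1/2) : ℝ) = Real.exp (-(1:ℝ)/2) := by norm_num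
  have hDen : (0:ℝ) < 2 * Real.exp (-(1:ℝ)/2) * Δ + 3 := by positivity
  have hDen2 : (2:ℝ) < 2 * Real.exp (-(1:ℝ)/2) * Δ + 3 := by nlinarith
  have hβc0 : 0 < βc := by
    rw [hβc]
    have : 2 / (2 * Real.exp (-(1:ℝ)/2) * Δ + 3) < 1 := (div_lt_one hDen).mpr hDen2
    linarith
  have hβc1 : βc < 1 := by
    rw [hβc]
    have : 0 < 2 / (2 * Real.exp (-(1:ℝ)/2) * Δ + 3) := by positivity
    linarith
  -- the box
  have hppos : (0:ℝ) < βc ^ Δ := pow_pos hβc0 Δ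
  have hp1 : βc ^ Δ ≤ 1 := pow_le_one₀ hβc0.le hβc1.le
  have hm0 : 0 < lam * βc ^ Δ := by positivity
  have hM0 : 0 < lam / βc ^ Δ := by positivity
  set m := lam * βc ^ Δ with hm
  set M := lam / βc ^ Δ with hM
  set ρ : ℝ := max (M / (1 + M)) (1 / (1 + m)) with hρ
  have hρ0 : 0 ≤ ρ := le_trans (by positivity) (le_max_right _ _)
  have hρ1 : ρ < 1 := by
    apply max_lt
    · rw [div_lt_one (by linarith)]; linarith
    · rw [div_lt_one (by linarith)]; linarith
  -- tail cutoff
  have htend : Filter.Tendsto (fun n : ℕ => (n:ℝ)^2 * ρ^n) Filter.atTop (nhds 0) :=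
    tendsto_pow_const_mul_const_pow_of_lt_one 2 hρ0 hρ1
  have hev : ∀ᶠ n : ℕ in Filter.atTop, (n:ℝ)^2 * ρ^n < Real.exp (-(1/2):ℝ) / 2 :=
    htend.eventually_lt_const (by positivity)
  obtain ⟨W₀, hW₀⟩ := Filter.eventually_atTop.mp hev
  -- constants
  set θ : ℝ := 1 + Real.exp (1/2 : ℝ) / (4 * (Δ:ℝ)) with hθ
  have hθ1 : 1 < θ := by
    have : 0 < Real.exp (1/2 : ℝ) / (4 * (Δ:ℝ)) := by positivity
    rw [hθ]; linarith
  have hlogN : 0 < Real.log ((W₀:ℝ) + 2) := Real.log_pos (by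
    have : (0:ℝ) ≤ (W₀:ℝ) := Nat.cast_nonneg _
    linarith)
  set c : ℝ := Real.log θ / Real.log ((W₀:ℝ) + 2) with hc
  have hc0 : 0 < c := div_pos (Real.log_pos hθ1) hlogN
  have hc1 : c ≤ 1 := by
    rw [hc, div_le_one hlogN]
    have h1 : Real.log θ ≤ θ - 1 := Real.log_le_sub_one_of_pos (by linarith)
    have h2 : Real.exp (1/2 : ℝ) ≤ 3 := by
      have h3 : Real.exp (1/2 : ℝ) ≤ Real.exp 1 := Real.exp_le_exp.mpr (by norm_num)
      have := Real.exp_one_lt_d9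
      linarith
    have h4 : θ - 1 ≤ 3/8 := by
      rw [hθ]
      have : Real.exp (1/2:ℝ) / (4 * (Δ:ℝ)) ≤ 3 / 8 :=
        div_le_div₀ (by norm_num) h2 (by norm_num) (by linarith)
      linarith
    have h5 : (3:ℝ)/8 ≤ Real.log 2 := by
      have := Real.log_two_gt_d9; linarith
    have h6 : Real.log 2 ≤ Real.log ((W₀:ℝ) + 2) := by
      have hW : (0:ℝ) ≤ (W₀:ℝ) := Nat.cast_nonneg _
      rw [Real.log_le_log_iff (by norm_num) (by linarith)]
      linarith
    calc Real.log θ ≤ θ - 1 := h1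
      _ ≤ 3/8 := h4
      _ ≤ Real.log 2 := h5
      _ ≤ Real.log ((W₀:ℝ) + 2) := h6
  set K' : ℝ := Real.exp (-(1/2):ℝ) + 1/(4*(Δ:ℝ)) with hK'
  have hK'0 : 0 < K' := by rw [hK']; positivity
  set α : ℝ := (Δ:ℝ) * ((1 - βc)/βc * K') with hα
  have hαlt : α < 1 := by
    have h1 : 1 - βc = 2 / (2 * Real.exp (-(1:ℝ)/2) * Δ + 3) := by rw [hβc]; ring
    have h2 : βc = (2 * Real.exp (-(1:ℝ)/2) * Δ + 1) / (2 * Real.exp (-(1:ℝ)/2) * Δ + 3) := by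
      rw [hβc]; field_simp; ring
    have hD1 : (0:ℝ) < 2 * Real.exp (-(1:ℝ)/2) * Δ + 1 := by positivity
    have h3 : α = ((2 * (Δ:ℝ) * Real.exp (-(1:ℝ)/2)) + 1/2) /
        (2 * Real.exp (-(1:ℝ)/2) * Δ + 1) := by
      rw [hα, h1, h2, hK', hEE]
      field_simp
      ring
    rw [h3, div_lt_one hD1]
    linarith
  refine ⟨α, c, hαlt, hc0, ?_⟩
  intro w hwpos r0 r1 h0 h1
  -- basic positivity of coordinates
  have hr0pos : ∀ i j, j < w i → 0 < r0 i j := fun i j hj => lt_of_lt_of_le hm0 (h0 i j hj).1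
  have hr1pos : ∀ i j, 1 ≤ j → j < w i → 0 < r1 i j := fun i j h1j hj =>
    lt_of_lt_of_le hm0 (h1 i j h1j hj).1
  have hgam : ∀ i, 0 ≤ 1 - ga i := fun i => by have := (hga i).2; linarith
  have hbem : ∀ i, 0 ≤ 1 - be i := fun i => by have := (hbe i).2; linarith
  -- eP, eQ bounds
  have hePpos : ∀ i, 0 < eP w r0 r1 i := by
    intro i
    have h := hr0pos i 0 (hwpos i)
    refine mul_pos (by positivity) (Finset.prod_pos fun j hj => ?_)
    obtain ⟨hj1, hj2⟩ := Finset.mem_Ico.mp hj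
    have := hr1pos i j hj1 hj2
    positivity
  have heP1 : ∀ i, eP w r0 r1 i ≤ 1 := by
    intro i
    have h := hr0pos i 0 (hwpos i)
    have h1' : r0 i 0 / (1 + r0 i 0) ≤ 1 := by
      rw [div_le_one (by linarith)]; linarith
    have h2' : ∏ j ∈ Finset.Ico 1 (w i), r1 i j / (1 + r1 i j) ≤ 1 := by
      apply Finset.prod_le_one
      · intro j hj
        obtain ⟨hj1, hj2⟩ := Finset.mem_Ico.mp hj
        have := hr1pos i j hj1 hj2
        positivity
      · intro j hj
        obtain ⟨hj1, hj2⟩ := Finset.mem_Ico.mp hj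
        have := hr1pos i j hj1 hj2
        rw [div_le_one (by linarith)]; linarith
    have h3' : 0 ≤ r0 i 0 / (1 + r0 i 0) := by positivity
    calc eP w r0 r1 i ≤ 1 * 1 := by
          apply mul_le_mul h1' h2' _ (by norm_num)
          exact Finset.prod_nonneg fun j hj => by
            obtain ⟨hj1, hj2⟩ := Finset.mem_Ico.mp hj
            have := hr1pos i j hj1 hj2
            positivity
      _ = 1 := by norm_num
  have heQpos : ∀ i, 0 < eQ w r0 i := by
    intro i
    have h := hr0pos i 0 (hwpos i)
    refine mul_pos (by positivity) (Finset.prod_pos fun j hj => ?_)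
    obtain ⟨hj1, hj2⟩ := Finset.mem_Ico.mp hj
    have := hr0pos i j hj2
    positivity
  have heQ1 : ∀ i, eQ w r0 i ≤ 1 := by
    intro i
    have h := hr0pos i 0 (hwpos i)
    have h1' : 1 / (1 + r0 i 0) ≤ 1 := by
      rw [div_le_one (by linarith)]; linarith
    have h2' : ∏ j ∈ Finset.Ico 1 (w i), 1 / (1 + r0 i j) ≤ 1 := by
      apply Finset.prod_le_one
      · intro j hj
        obtain ⟨hj1, hj2⟩ := Finset.mem_Ico.mp hj
        have := hr0pos i j hj2
        positivity
      · intro j hj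
        obtain ⟨hj1, hj2⟩ := Finset.mem_Ico.mp hj
        have := hr0pos i j hj2
        rw [div_le_one (by linarith)]; linarith
    calc eQ w r0 i ≤ 1 * 1 := by
          apply mul_le_mul h1' h2' _ (by norm_num)
          exact Finset.prod_nonneg fun j hj => by
            obtain ⟨hj1, hj2⟩ := Finset.mem_Ico.mp hj
            have := hr0pos i j hj2
            positivity
      _ = 1 := by norm_num
  have hAge : ∀ i, βc ≤ eA w ga r0 r1 i := by
    intro i
    have h1' : (1 - ga i) * eP w r0 r1 i ≤ (1 - βc) * 1 := by
      apply mul_le_mul _ (heP1 i) (hePpos i).le (by linarith)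
      have := (hga i).1; linarith
    simp only [eA]; linarith
  have hBge : ∀ i, βc ≤ eB w be r0 i := by
    intro i
    have h1' : (1 - be i) * eQ w r0 i ≤ (1 - βc) * 1 := by
      apply mul_le_mul _ (heQ1 i) (heQpos i).le (by linarith)
      have := (hbe i).1; linarith
    simp only [eB]; linarith
  have hApos : ∀ i, 0 < eA w ga r0 r1 i := fun i => lt_of_lt_of_le hβc0 (hAge i)
  have hBpos : ∀ i, 0 < eB w be r0 i := fun i => lt_of_lt_of_le hβc0 (hBge i)
  -- per-edge exact identity
  have sum_eq : ∀ i : Fin d,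
      (∑ j ∈ Finset.range (w i),
          r0 i j / spinF lam w be ga r0 r1 * |spinPD0 lam w be ga r0 r1 i j|) +
      (∑ j ∈ Finset.Ico 1 (w i),
          r1 i j / spinF lam w be ga r0 r1 * |spinPD1 lam w be ga r0 r1 i j|) =
      (1 - ga i) / eA w ga r0 r1 i *
        (eP w r0 r1 i * (1 / (1 + r0 i 0) + ∑ j ∈ Finset.Ico 1 (w i), 1 / (1 + r1 i j))) +
      (1 - be i) / eB w be r0 i *
        (eQ w r0 i * (r0 i 0 / (1 + r0 i 0) +
          ∑ j ∈ Finset.Ico 1 (w i), r0 i j / (1 + r0 i j))) := by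
    intro i
    have hz : (0:ℕ) ∉ Finset.Ico 1 (w i) := by simp
    have hrange : Finset.range (w i) = insert 0 (Finset.Ico 1 (w i)) := by
      rw [Finset.range_eq_Ico, ← Finset.insert_Ico_add_one_left_eq_Ico (hwpos i), zero_add]
    rw [hrange, Finset.sum_insert hz]
    rw [term00_eq lam w be ga r0 r1 i hlam0 hr0pos hr1pos hwpos hgam hbem hApos hBpos]
    rw [Finset.sum_congr rfl (fun j hj =>
      term0_eq lam w be ga r0 r1 i j hj hlam0 hr0pos hwpos hbem hApos hBpos)]
    rw [Finset.sum_congr rfl (fun j hj =>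
      term1_eq lam w be ga r0 r1 i j hj hlam0 hr0pos hr1pos hwpos hgam hApos hBpos)]
    rw [← Finset.mul_sum, ← Finset.mul_sum, ← Finset.mul_sum, ← Finset.mul_sum]
    ring
  -- bounds on the VV and UU brackets
  have hVV0 : ∀ i : Fin d, 0 ≤ eP w r0 r1 i *
      (1 / (1 + r0 i 0) + ∑ j ∈ Finset.Ico 1 (w i), 1 / (1 + r1 i j)) := by
    intro i
    have h := hr0pos i 0 (hwpos i)
    refine mul_nonneg (hePpos i).le (add_nonneg (by positivity) (Finset.sum_nonneg fun j hj => ?_))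
    obtain ⟨hj1, hj2⟩ := Finset.mem_Ico.mp hj
    have := hr1pos i j hj1 hj2
    positivity
  have hUU0 : ∀ i : Fin d, 0 ≤ eQ w r0 i * (r0 i 0 / (1 + r0 i 0) +
      ∑ j ∈ Finset.Ico 1 (w i), r0 i j / (1 + r0 i j)) := by
    intro i
    have h := hr0pos i 0 (hwpos i)
    refine mul_nonneg (heQpos i).le (add_nonneg (by positivity) (Finset.sum_nonneg fun j hj => ?_))
    obtain ⟨hj1, hj2⟩ := Finset.mem_Ico.mp hj
    have := hr0pos i j hj2
    positivity
  have hVVform : ∀ i : Fin d,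
      eP w r0 r1 i * (1 / (1 + r0 i 0) + ∑ j ∈ Finset.Ico 1 (w i), 1 / (1 + r1 i j)) =
      (r0 i 0 / (1 + r0 i 0) * ∏ j ∈ Finset.Ico 1 (w i), r1 i j / (1 + r1 i j)) *
        ((1 - r0 i 0 / (1 + r0 i 0)) +
          ∑ j ∈ Finset.Ico 1 (w i), (1 - r1 i j / (1 + r1 i j))) := by
    intro i
    have hx0 := hr0pos i 0 (hwpos i)
    have e0 : (1:ℝ) / (1 + r0 i 0) = 1 - r0 i 0 / (1 + r0 i 0) := by
      field_simp
      ring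
    have esum : ∑ j ∈ Finset.Ico 1 (w i), (1:ℝ) / (1 + r1 i j)
        = ∑ j ∈ Finset.Ico 1 (w i), (1 - r1 i j / (1 + r1 i j)) :=
      Finset.sum_congr rfl fun j hj => by
        obtain ⟨hj1, hj2⟩ := Finset.mem_Ico.mp hj
        have := hr1pos i j hj1 hj2
        field_simp
        ring
    simp only [eP]
    rw [e0, esum]
  have hUUform : ∀ i : Fin d,
      eQ w r0 i * (r0 i 0 / (1 + r0 i 0) +
        ∑ j ∈ Finset.Ico 1 (w i), r0 i j / (1 + r0 i j)) =
      ((1 - r0 i 0 / (1 + r0 i 0)) * ∏ j ∈ Finset.Ico 1 (w i), (1 - r0 i j / (1 + r0 i j))) *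
        ((1 - (1 - r0 i 0 / (1 + r0 i 0))) +
          ∑ j ∈ Finset.Ico 1 (w i), (1 - (1 - r0 i j / (1 + r0 i j)))) := by
    intro i
    have hx0 := hr0pos i 0 (hwpos i)
    have e0 : (1:ℝ) / (1 + r0 i 0) = 1 - r0 i 0 / (1 + r0 i 0) := by
      field_simp
      ring
    have eprod : ∏ j ∈ Finset.Ico 1 (w i), (1:ℝ) / (1 + r0 i j)
        = ∏ j ∈ Finset.Ico 1 (w i), (1 - r0 i j / (1 + r0 i j)) :=
      Finset.prod_congr rfl fun j hj => by
        obtain ⟨hj1, hj2⟩ := Finset.mem_Ico.mp hj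
        have := hr0pos i j hj2
        field_simp
        ring
    have esum3 : ∑ j ∈ Finset.Ico 1 (w i), (1 - (1 - r0 i j / (1 + r0 i j)))
        = ∑ j ∈ Finset.Ico 1 (w i), r0 i j / (1 + r0 i j) :=
      Finset.sum_congr rfl fun j hj => by ring
    simp only [eQ]
    rw [e0, eprod, esum3]
    ring
  -- membership-based coordinate bounds
  have haM : ∀ i : Fin d, r0 i 0 / (1 + r0 i 0) ≤ ρ := by
    intro i
    have hx0 := hr0pos i 0 (hwpos i)
    refine le_trans (le_trans (aux_mono _ M hx0.le (h0 i 0 (hwpos i)).2) (le_refl _))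
      (le_max_left _ _)
  have ha1' : ∀ i : Fin d, r0 i 0 / (1 + r0 i 0) ≤ 1 := by
    intro i
    have hx0 := hr0pos i 0 (hwpos i)
    rw [div_le_one (by linarith)]; linarith
  have hinv : ∀ x : ℝ, 0 < x → m ≤ x → 1 - x / (1 + x) ≤ ρ := by
    intro x hx hmx
    have h1x : (0:ℝ) < 1 + x := by linarith
    have e1 : 1 - x / (1 + x) = 1 / (1 + x) := by field_simp; ring
    rw [e1]
    refine le_trans (one_div_le_one_div_of_le (by linarith) (by linarith)) (le_max_right _ _)
  -- exponential bounds
  have hVUexp : ∀ i : Fin d,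
      eP w r0 r1 i * (1 / (1 + r0 i 0) + ∑ j ∈ Finset.Ico 1 (w i), 1 / (1 + r1 i j)) +
      eQ w r0 i * (r0 i 0 / (1 + r0 i 0) +
        ∑ j ∈ Finset.Ico 1 (w i), r0 i j / (1 + r0 i j)) ≤ Real.exp (-(1/2):ℝ) := by
    intro i
    have hx0 := hr0pos i 0 (hwpos i)
    have ha0 : 0 ≤ r0 i 0 / (1 + r0 i 0) := by positivity
    have hVV : eP w r0 r1 i * (1 / (1 + r0 i 0) + ∑ j ∈ Finset.Ico 1 (w i), 1 / (1 + r1 i j))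
        ≤ (r0 i 0 / (1 + r0 i 0)) * Real.exp (-(r0 i 0 / (1 + r0 i 0))) := by
      rw [hVVform i]
      refine aux_lemA _ _ _ ha0 (ha1' i) (fun j hj => ?_) (fun j hj => ?_)
      · obtain ⟨hj1, hj2⟩ := Finset.mem_Ico.mp hj
        have := hr1pos i j hj1 hj2
        positivity
      · obtain ⟨hj1, hj2⟩ := Finset.mem_Ico.mp hj
        have := hr1pos i j hj1 hj2
        rw [div_le_one (by linarith)]; linarith
    have hUU : eQ w r0 i * (r0 i 0 / (1 + r0 i 0) +
        ∑ j ∈ Finset.Ico 1 (w i), r0 i j / (1 + r0 i j))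
        ≤ (1 - r0 i 0 / (1 + r0 i 0)) * Real.exp (-(1 - r0 i 0 / (1 + r0 i 0))) := by
      rw [hUUform i]
      refine aux_lemA _ _ _ (by linarith [ha1' i]) (by linarith) (fun j hj => ?_) (fun j hj => ?_)
      · obtain ⟨hj1, hj2⟩ := Finset.mem_Ico.mp hj
        have hxj := hr0pos i j hj2
        have : r0 i j / (1 + r0 i j) ≤ 1 := by rw [div_le_one (by linarith)]; linarith
        linarith
      · obtain ⟨hj1, hj2⟩ := Finset.mem_Ico.mp hj
        have hxj := hr0pos i j hj2
        have : 0 ≤ r0 i j / (1 + r0 i j) := by positivity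
        linarith
    have := aux_lemB (r0 i 0 / (1 + r0 i 0)) ha0 (ha1' i)
    linarith
  -- box bounds
  have hcardN : ∀ i : Fin d, (Finset.Ico 1 (w i)).card + 1 = w i := by
    intro i; rw [Nat.card_Ico]; have := hwpos i; omega
  have hVUbox : ∀ i : Fin d,
      eP w r0 r1 i * (1 / (1 + r0 i 0) + ∑ j ∈ Finset.Ico 1 (w i), 1 / (1 + r1 i j)) +
      eQ w r0 i * (r0 i 0 / (1 + r0 i 0) +
        ∑ j ∈ Finset.Ico 1 (w i), r0 i j / (1 + r0 i j)) ≤ 2 * ((w i : ℝ) * ρ ^ (w i)) := by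
    intro i
    have hx0 := hr0pos i 0 (hwpos i)
    have ha0 : 0 ≤ r0 i 0 / (1 + r0 i 0) := by positivity
    have hcast : ((Finset.Ico 1 (w i)).card : ℝ) + 1 = (w i : ℝ) := by
      have := hcardN i
      exact_mod_cast congrArg (Nat.cast (R := ℝ)) this
    have hVV : eP w r0 r1 i * (1 / (1 + r0 i 0) + ∑ j ∈ Finset.Ico 1 (w i), 1 / (1 + r1 i j))
        ≤ (w i : ℝ) * ρ ^ (w i) := by
      rw [hVVform i]
      have hb := aux_box (r0 i 0 / (1 + r0 i 0)) ρ (Finset.Ico 1 (w i))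
        (fun j => r1 i j / (1 + r1 i j)) hρ0 hρ1.le ha0 (haM i)
        (fun j hj => by
          obtain ⟨hj1, hj2⟩ := Finset.mem_Ico.mp hj
          have := hr1pos i j hj1 hj2
          positivity)
        (fun j hj => by
          obtain ⟨hj1, hj2⟩ := Finset.mem_Ico.mp hj
          have := hr1pos i j hj1 hj2
          exact le_trans (aux_mono _ M (by positivity) (h1 i j hj1 hj2).2) (le_max_left _ _))
        (ha1' i)
      rw [hcardN i, hcast] at hb
      exact hb
    have hUU : eQ w r0 i * (r0 i 0 / (1 + r0 i 0) +
        ∑ j ∈ Finset.Ico 1 (w i), r0 i j / (1 + r0 i j)) ≤ (w i : ℝ) * ρ ^ (w i) := by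
      rw [hUUform i]
      have hb := aux_box (1 - r0 i 0 / (1 + r0 i 0)) ρ (Finset.Ico 1 (w i))
        (fun j => 1 - r0 i j / (1 + r0 i j)) hρ0 hρ1.le (by linarith [ha1' i])
        (hinv _ hx0 (h0 i 0 (hwpos i)).1)
        (fun j hj => by
          obtain ⟨hj1, hj2⟩ := Finset.mem_Ico.mp hj
          have hxj := hr0pos i j hj2
          have : r0 i j / (1 + r0 i j) ≤ 1 := by rw [div_le_one (by linarith)]; linarith
          linarith)
        (fun j hj => by
          obtain ⟨hj1, hj2⟩ := Finset.mem_Ico.mp hj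
          exact hinv _ (hr0pos i j hj2) (h0 i j hj2).1)
        (by linarith)
      rw [hcardN i, hcast] at hb
      exact hb
    linarith
  -- coefficient bound
  have hC : (0:ℝ) ≤ (1 - βc) / βc := div_nonneg (by linarith) hβc0.le
  -- per-edge amortized bound
  have edge : ∀ i : Fin d, (w i : ℝ) ^ c *
      ((∑ j ∈ Finset.range (w i),
          r0 i j / spinF lam w be ga r0 r1 * |spinPD0 lam w be ga r0 r1 i j|) +
       (∑ j ∈ Finset.Ico 1 (w i),
          r1 i j / spinF lam w be ga r0 r1 * |spinPD1 lam w be ga r0 r1 i j|))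
      ≤ (1 - βc) / βc * K' := by
    intro i
    rw [sum_eq i]
    have hcg : (1 - ga i) / eA w ga r0 r1 i ≤ (1 - βc) / βc := by
      apply div_le_div₀ (by linarith) _ hβc0 (hAge i)
      have := (hga i).1; linarith
    have hcb : (1 - be i) / eB w be r0 i ≤ (1 - βc) / βc := by
      apply div_le_div₀ (by linarith) _ hβc0 (hBge i)
      have := (hbe i).1; linarith
    have hS : (1 - ga i) / eA w ga r0 r1 i *
        (eP w r0 r1 i * (1 / (1 + r0 i 0) + ∑ j ∈ Finset.Ico 1 (w i), 1 / (1 + r1 i j))) +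
        (1 - be i) / eB w be r0 i *
        (eQ w r0 i * (r0 i 0 / (1 + r0 i 0) +
          ∑ j ∈ Finset.Ico 1 (w i), r0 i j / (1 + r0 i j)))
        ≤ (1 - βc) / βc *
          (eP w r0 r1 i * (1 / (1 + r0 i 0) + ∑ j ∈ Finset.Ico 1 (w i), 1 / (1 + r1 i j)) +
           eQ w r0 i * (r0 i 0 / (1 + r0 i 0) +
            ∑ j ∈ Finset.Ico 1 (w i), r0 i j / (1 + r0 i j))) := by
      have t1 := mul_le_mul_of_nonneg_right hcg (hVV0 i)
      have t2 := mul_le_mul_of_nonneg_right hcb (hUU0 i)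
      nlinarith [t1, t2]
    have hwc0 : (0:ℝ) ≤ (w i : ℝ) ^ c := Real.rpow_nonneg (Nat.cast_nonneg _) _
    have hVUK : (w i : ℝ) ^ c *
        (eP w r0 r1 i * (1 / (1 + r0 i 0) + ∑ j ∈ Finset.Ico 1 (w i), 1 / (1 + r1 i j)) +
         eQ w r0 i * (r0 i 0 / (1 + r0 i 0) +
          ∑ j ∈ Finset.Ico 1 (w i), r0 i j / (1 + r0 i j))) ≤ K' := by
      have hVU0 : 0 ≤ eP w r0 r1 i *
          (1 / (1 + r0 i 0) + ∑ j ∈ Finset.Ico 1 (w i), 1 / (1 + r1 i j)) +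
          eQ w r0 i * (r0 i 0 / (1 + r0 i 0) +
            ∑ j ∈ Finset.Ico 1 (w i), r0 i j / (1 + r0 i j)) :=
        add_nonneg (hVV0 i) (hUU0 i)
      rcases le_or_gt (w i) (W₀ + 2) with hsmall | hbig
      · have h1' : (w i : ℝ) ^ c ≤ ((W₀:ℝ) + 2) ^ c := by
          apply Real.rpow_le_rpow (Nat.cast_nonneg _) _ hc0.le
          have : ((w i : ℕ) : ℝ) ≤ ((W₀ + 2 : ℕ) : ℝ) := by exact_mod_cast hsmall
          push_cast at this
          linarith
        have h2' : ((W₀:ℝ) + 2) ^ c = θ := by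
          have hlog : Real.log ((W₀:ℝ) + 2) * c = Real.log θ := by
            rw [hc]; field_simp
          rw [Real.rpow_def_of_pos (by positivity), hlog, Real.exp_log (by linarith)]
        have hmulE : Real.exp (1/2 : ℝ) * Real.exp (-(1/2) : ℝ) = 1 := by
          rw [← Real.exp_add]; norm_num
        calc (w i : ℝ) ^ c * _ ≤ θ * Real.exp (-(1/2):ℝ) := by
              apply mul_le_mul (le_of_le_of_eq h1' h2') (hVUexp i) hVU0 (by linarith)
          _ = K' := by
              rw [hθ, hK', add_mul, one_mul]
              congr 1
              rw [div_mul_eq_mul_div, hmulE]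
      · have hwge : W₀ ≤ w i := by omega
        have hw1 : (1:ℝ) ≤ (w i : ℝ) := by exact_mod_cast hwpos i
        have h1' : (w i : ℝ) ^ c ≤ (w i : ℝ) ^ (1:ℝ) :=
          Real.rpow_le_rpow_of_exponent_le hw1 hc1
        rw [Real.rpow_one] at h1'
        have h4' := hW₀ (w i) hwge
        calc (w i : ℝ) ^ c * _ ≤ (w i : ℝ) * (2 * ((w i : ℝ) * ρ ^ (w i))) :=
              mul_le_mul h1' (hVUbox i) hVU0 (by linarith)
          _ = 2 * ((w i : ℝ) ^ 2 * ρ ^ (w i)) := by ring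
          _ ≤ Real.exp (-(1/2):ℝ) := by linarith
          _ ≤ K' := by
              rw [hK']
              have : (0:ℝ) < 1 / (4 * (Δ:ℝ)) := by positivity
              linarith
    calc (w i : ℝ) ^ c * _ ≤ (w i : ℝ) ^ c * ((1 - βc) / βc *
          (eP w r0 r1 i * (1 / (1 + r0 i 0) + ∑ j ∈ Finset.Ico 1 (w i), 1 / (1 + r1 i j)) +
           eQ w r0 i * (r0 i 0 / (1 + r0 i 0) +
            ∑ j ∈ Finset.Ico 1 (w i), r0 i j / (1 + r0 i j)))) :=
          mul_le_mul_of_nonneg_left hS hwc0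
      _ = (1 - βc) / βc * ((w i : ℝ) ^ c *
          (eP w r0 r1 i * (1 / (1 + r0 i 0) + ∑ j ∈ Finset.Ico 1 (w i), 1 / (1 + r1 i j)) +
           eQ w r0 i * (r0 i 0 / (1 + r0 i 0) +
            ∑ j ∈ Finset.Ico 1 (w i), r0 i j / (1 + r0 i j)))) := by ring
      _ ≤ (1 - βc) / βc * K' := mul_le_mul_of_nonneg_left hVUK hC
  calc ∑ i : Fin d, (w i : ℝ) ^ c *
        ((∑ j ∈ Finset.range (w i),
            r0 i j / spinF lam w be ga r0 r1 * |spinPD0 lam w be ga r0 r1 i j|) +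
         (∑ j ∈ Finset.Ico 1 (w i),
            r1 i j / spinF lam w be ga r0 r1 * |spinPD1 lam w be ga r0 r1 i j|))
      ≤ ∑ _i : Fin d, (1 - βc) / βc * K' := Finset.sum_le_sum fun i _ => edge i
    _ = (d : ℝ) * ((1 - βc) / βc * K') := by
        rw [Finset.sum_const, Finset.card_univ, Fintype.card_fin, nsmul_eq_mul]
    _ ≤ (Δ : ℝ) * ((1 - βc) / βc * K') := by
        apply mul_le_mul_of_nonneg_right _ (mul_nonneg hC hK'0.le)
        exact_mod_cast hd
    _ = α := hα.symm
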